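/- If u₁ ∈ L²_{r₁}(ℝ^{d₁}) and u₂ ∈ L²_{r₂}(ℝ^{d₂}) with r₁ ≤ 0 and r₂ ≤ 0, then the tensor product u₁ ⊗ u₂ (defined by (u₁⊗u₂)(x,y) = u₁(x)u₂(y)) belongs to L²_{r₁+r₂}(ℝ^{d₁+d₂}). -/

import Mathlib

open MeasureTheory Real
open scoped FourierTransform RealInnerProductSpace

noncomputable section
namespace TensorAux

variable (d₁ d₂ : ℕ)

def eqT : (EuclideanSpace ℝ (Fin d₁) × EuclideanSpace ℝ (Fin d₂)) ≃ᵐ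
    EuclideanSpace ℝ (Fin (d₁ + d₂)) :=
  (((MeasurableEquiv.toLp 2 (Fin d₁ → ℝ)).symm).prodCongr
      ((MeasurableEquiv.toLp 2 (Fin d₂ → ℝ)).symm)).trans <|
    ((MeasurableEquiv.sumPiEquivProdPi (fun _ : Fin d₁ ⊕ Fin d₂ => ℝ)).symm).trans <|
      (MeasurableEquiv.piCongrLeft (fun _ => ℝ) finSumFinEquiv).trans
        ((MeasurableEquiv.toLp 2 (Fin (d₁ + d₂) → ℝ)).symm).symm

lemma eqT_measurePreserving :
    MeasurePreserving (eqT d₁ d₂) (volume.prod volume) volume := by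
  have h1 : MeasurePreserving
      (Prod.map ((MeasurableEquiv.toLp 2 (Fin d₁ → ℝ)).symm)
        ((MeasurableEquiv.toLp 2 (Fin d₂ → ℝ)).symm))
      (volume.prod volume) (volume.prod volume) :=
    (EuclideanSpace.volume_preserving_symm_measurableEquiv_toLp (Fin d₁)).prod
      (EuclideanSpace.volume_preserving_symm_measurableEquiv_toLp (Fin d₂))
  have h2 := volume_measurePreserving_sumPiEquivProdPi_symm (fun _ : Fin d₁ ⊕ Fin d₂ => ℝ)
  have h3 := volume_measurePreserving_piCongrLeft (fun _ : Fin (d₁ + d₂) => ℝ) finSumFinEquiv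
  have h4 := (EuclideanSpace.volume_preserving_symm_measurableEquiv_toLp (Fin (d₁ + d₂))).symm
  rw [Measure.volume_eq_prod] at h2
  exact ((h4.comp h3).comp h2).comp h1

variable {d₁ d₂}

lemma eqT_apply_castAdd (x : EuclideanSpace ℝ (Fin d₁)) (y : EuclideanSpace ℝ (Fin d₂))
    (i : Fin d₁) : eqT d₁ d₂ (x, y) (Fin.castAdd d₂ i) = x i := by
  rw [show Fin.castAdd d₂ i = finSumFinEquiv (Sum.inl i) from (finSumFinEquiv_apply_left i).symm]
  show (MeasurableEquiv.piCongrLeft (fun _ : Fin (d₁ + d₂) => ℝ) finSumFinEquiv) _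
      (finSumFinEquiv (Sum.inl i)) = x i
  rw [MeasurableEquiv.piCongrLeft_apply_apply]; rfl

lemma eqT_apply_natAdd (x : EuclideanSpace ℝ (Fin d₁)) (y : EuclideanSpace ℝ (Fin d₂))
    (i : Fin d₂) : eqT d₁ d₂ (x, y) (Fin.natAdd d₁ i) = y i := by
  rw [show Fin.natAdd d₁ i = finSumFinEquiv (Sum.inr i) from (finSumFinEquiv_apply_right i).symm]
  show (MeasurableEquiv.piCongrLeft (fun _ : Fin (d₁ + d₂) => ℝ) finSumFinEquiv) _
      (finSumFinEquiv (Sum.inr i)) = y i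
  rw [MeasurableEquiv.piCongrLeft_apply_apply]; rfl

def P₁ (ξ : EuclideanSpace ℝ (Fin (d₁ + d₂))) : EuclideanSpace ℝ (Fin d₁) :=
  (EuclideanSpace.equiv (Fin d₁) ℝ).symm fun i => ξ (Fin.castAdd d₂ i)

def P₂ (ξ : EuclideanSpace ℝ (Fin (d₁ + d₂))) : EuclideanSpace ℝ (Fin d₂) :=
  (EuclideanSpace.equiv (Fin d₂) ℝ).symm fun i => ξ (Fin.natAdd d₁ i)

lemma P₁_eqT (x : EuclideanSpace ℝ (Fin d₁)) (y : EuclideanSpace ℝ (Fin d₂)) :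
    P₁ (eqT d₁ d₂ (x, y)) = x := by
  ext i; exact eqT_apply_castAdd x y i

lemma P₂_eqT (x : EuclideanSpace ℝ (Fin d₁)) (y : EuclideanSpace ℝ (Fin d₂)) :
    P₂ (eqT d₁ d₂ (x, y)) = y := by
  ext i; exact eqT_apply_natAdd x y i

lemma inner_eqT (x : EuclideanSpace ℝ (Fin d₁)) (y : EuclideanSpace ℝ (Fin d₂))
    (ξ : EuclideanSpace ℝ (Fin (d₁ + d₂))) :
    ⟪eqT d₁ d₂ (x, y), ξ⟫ = ⟪x, P₁ ξ⟫ + ⟪y, P₂ ξ⟫ := by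
  simp only [PiLp.inner_apply, RCLike.inner_apply, conj_trivial]
  rw [Fin.sum_univ_add]
  congr 1
  · exact Finset.sum_congr rfl fun i _ => by rw [eqT_apply_castAdd]; rfl
  · exact Finset.sum_congr rfl fun i _ => by rw [eqT_apply_natAdd]; rfl

lemma norm_sq_eqT (x : EuclideanSpace ℝ (Fin d₁)) (y : EuclideanSpace ℝ (Fin d₂)) :
    ‖eqT d₁ d₂ (x, y)‖ ^ 2 = ‖x‖ ^ 2 + ‖y‖ ^ 2 := by
  rw [← real_inner_self_eq_norm_sq, ← real_inner_self_eq_norm_sq, ← real_inner_self_eq_norm_sq,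
    inner_eqT, P₁_eqT, P₂_eqT]

lemma fourier_tensor (u₁ : EuclideanSpace ℝ (Fin d₁) → ℂ) (u₂ : EuclideanSpace ℝ (Fin d₂) → ℂ)
    (ξ : EuclideanSpace ℝ (Fin (d₁ + d₂))) :
    𝓕 (fun x : EuclideanSpace ℝ (Fin (d₁ + d₂)) => u₁ (P₁ x) * u₂ (P₂ x)) ξ
      = 𝓕 u₁ (P₁ ξ) * 𝓕 u₂ (P₂ ξ) := by
  rw [Real.fourier_eq, Real.fourier_eq, Real.fourier_eq,
    ← (eqT_measurePreserving d₁ d₂).integral_comp (eqT d₁ d₂).measurableEmbedding,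
    ← integral_prod_mul (μ := volume) (ν := volume)
      (f := fun v => 𝐞 (-⟪v, P₁ ξ⟫) • u₁ v) (g := fun v => 𝐞 (-⟪v, P₂ ξ⟫) • u₂ v)]
  apply integral_congr_ae
  filter_upwards [] with p
  rw [inner_eqT p.1 p.2 ξ, P₁_eqT, P₂_eqT, neg_add, AddChar.map_add_eq_mul]
  simp only [Circle.smul_def, Circle.coe_mul, smul_eq_mul]
  ring

end TensorAux

end

open TensorAux

/-- Tensor products of (negative-order) Sobolev functions: if `⟨ξ⟩^{r₁} û₁ ∈ L²(ℝ^{d₁})`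
and `⟨ξ⟩^{r₂} û₂ ∈ L²(ℝ^{d₂})` with `r₁, r₂ ≤ 0`, then the tensor product
`u₁ ⊗ u₂` lies in `L²_{r₁+r₂}(ℝ^{d₁+d₂})`. -/
theorem stmt_0 (d₁ d₂ : ℕ) (r₁ r₂ : ℝ) (hr₁ : r₁ ≤ 0) (hr₂ : r₂ ≤ 0)
    (u₁ : EuclideanSpace ℝ (Fin d₁) → ℂ) (u₂ : EuclideanSpace ℝ (Fin d₂) → ℂ)
    (hu₁ : Integrable fun ξ : EuclideanSpace ℝ (Fin d₁) =>
      (1 + ‖ξ‖ ^ 2) ^ r₁ * ‖𝓕 u₁ ξ‖ ^ 2)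
    (hu₂ : Integrable fun ξ : EuclideanSpace ℝ (Fin d₂) =>
      (1 + ‖ξ‖ ^ 2) ^ r₂ * ‖𝓕 u₂ ξ‖ ^ 2) :
    Integrable fun ξ : EuclideanSpace ℝ (Fin (d₁ + d₂)) =>
      (1 + ‖ξ‖ ^ 2) ^ (r₁ + r₂) *
        ‖𝓕 (fun x : EuclideanSpace ℝ (Fin (d₁ + d₂)) =>
            u₁ ((EuclideanSpace.equiv (Fin d₁) ℝ).symm fun i => x (Fin.castAdd d₂ i)) *
            u₂ ((EuclideanSpace.equiv (Fin d₂) ℝ).symm fun i => x (Fin.natAdd d₁ i))) ξ‖ ^ 2 := by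
  -- rewrite the Fourier transform of the tensor product
  have hfe : (fun ξ : EuclideanSpace ℝ (Fin (d₁ + d₂)) =>
      (1 + ‖ξ‖ ^ 2) ^ (r₁ + r₂) *
        ‖𝓕 (fun x : EuclideanSpace ℝ (Fin (d₁ + d₂)) =>
            u₁ ((EuclideanSpace.equiv (Fin d₁) ℝ).symm fun i => x (Fin.castAdd d₂ i)) *
            u₂ ((EuclideanSpace.equiv (Fin d₂) ℝ).symm fun i => x (Fin.natAdd d₁ i))) ξ‖ ^ 2)
      = fun ξ => (1 + ‖ξ‖ ^ 2) ^ (r₁ + r₂) * (‖𝓕 u₁ (P₁ ξ)‖ ^ 2 * ‖𝓕 u₂ (P₂ ξ)‖ ^ 2) := by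
    funext ξ
    rw [show (fun x : EuclideanSpace ℝ (Fin (d₁ + d₂)) =>
        u₁ ((EuclideanSpace.equiv (Fin d₁) ℝ).symm fun i => x (Fin.castAdd d₂ i)) *
        u₂ ((EuclideanSpace.equiv (Fin d₂) ℝ).symm fun i => x (Fin.natAdd d₁ i)))
      = fun x => u₁ (P₁ x) * u₂ (P₂ x) from rfl, fourier_tensor, norm_mul, mul_pow]
  rw [hfe]
  rw [← (eqT_measurePreserving d₁ d₂).integrable_comp_emb (eqT d₁ d₂).measurableEmbedding]
  -- measurability of the two squared-norm factors
  have haux : ∀ (d : ℕ) (r : ℝ) (u : EuclideanSpace ℝ (Fin d) → ℂ),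
      Integrable (fun ξ : EuclideanSpace ℝ (Fin d) => (1 + ‖ξ‖ ^ 2) ^ r * ‖𝓕 u ξ‖ ^ 2) →
      AEStronglyMeasurable (fun ξ : EuclideanSpace ℝ (Fin d) => ‖𝓕 u ξ‖ ^ 2) volume := by
    intro d r u hu
    have hc : Continuous fun ξ : EuclideanSpace ℝ (Fin d) => (1 + ‖ξ‖ ^ 2) ^ (-r) := by
      apply Continuous.rpow_const (by fun_prop)
      intro x
      left
      positivity
    have := (hc.aestronglyMeasurable).mul hu.aestronglyMeasurable
    refine this.congr (Filter.Eventually.of_forall fun ξ => ?_)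
    have hb : (0 : ℝ) < 1 + ‖ξ‖ ^ 2 := by positivity
    simp only [Pi.mul_apply]
    rw [← mul_assoc, ← Real.rpow_add hb, neg_add_cancel, Real.rpow_zero, one_mul]
  have hm₁ := haux d₁ r₁ u₁ hu₁
  have hm₂ := haux d₂ r₂ u₂ hu₂
  -- the composed function
  have hcompeq : ((fun ξ : EuclideanSpace ℝ (Fin (d₁ + d₂)) =>
        (1 + ‖ξ‖ ^ 2) ^ (r₁ + r₂) * (‖𝓕 u₁ (P₁ ξ)‖ ^ 2 * ‖𝓕 u₂ (P₂ ξ)‖ ^ 2)) ∘ (eqT d₁ d₂))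
      = fun p : EuclideanSpace ℝ (Fin d₁) × EuclideanSpace ℝ (Fin d₂) =>
        (1 + (‖p.1‖ ^ 2 + ‖p.2‖ ^ 2)) ^ (r₁ + r₂) * (‖𝓕 u₁ p.1‖ ^ 2 * ‖𝓕 u₂ p.2‖ ^ 2) := by
    funext p
    obtain ⟨x, y⟩ := p
    simp only [Function.comp_apply]
    rw [norm_sq_eqT, P₁_eqT, P₂_eqT]
  rw [hcompeq]
  -- dominate by the product of the two integrable functions
  have hG : Integrable (fun p : EuclideanSpace ℝ (Fin d₁) × EuclideanSpace ℝ (Fin d₂) =>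
      ((1 + ‖p.1‖ ^ 2) ^ r₁ * ‖𝓕 u₁ p.1‖ ^ 2) * ((1 + ‖p.2‖ ^ 2) ^ r₂ * ‖𝓕 u₂ p.2‖ ^ 2))
      (volume.prod volume) := hu₁.mul_prod hu₂
  refine hG.mono' ?_ ?_
  · have hc : Continuous fun p : EuclideanSpace ℝ (Fin d₁) × EuclideanSpace ℝ (Fin d₂) =>
        (1 + (‖p.1‖ ^ 2 + ‖p.2‖ ^ 2)) ^ (r₁ + r₂) := by
      apply Continuous.rpow_const (by fun_prop)
      intro x
      left
      positivity
    exact hc.aestronglyMeasurable.mul (hm₁.comp_fst.mul hm₂.comp_snd)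
  · filter_upwards [] with p
    have h1 : (0 : ℝ) < 1 + ‖p.1‖ ^ 2 := by positivity
    have h2 : (0 : ℝ) < 1 + ‖p.2‖ ^ 2 := by positivity
    have hb : (0 : ℝ) < 1 + (‖p.1‖ ^ 2 + ‖p.2‖ ^ 2) := by positivity
    have key : (1 + (‖p.1‖ ^ 2 + ‖p.2‖ ^ 2)) ^ (r₁ + r₂)
        ≤ (1 + ‖p.1‖ ^ 2) ^ r₁ * (1 + ‖p.2‖ ^ 2) ^ r₂ := by
      rw [Real.rpow_add hb]
      have keyA : (1 + (‖p.1‖ ^ 2 + ‖p.2‖ ^ 2)) ^ r₁ ≤ (1 + ‖p.1‖ ^ 2) ^ r₁ :=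
        Real.rpow_le_rpow_of_nonpos h1 (by nlinarith [sq_nonneg ‖p.2‖]) hr₁
      have keyB : (1 + (‖p.1‖ ^ 2 + ‖p.2‖ ^ 2)) ^ r₂ ≤ (1 + ‖p.2‖ ^ 2) ^ r₂ :=
        Real.rpow_le_rpow_of_nonpos h2 (by nlinarith [sq_nonneg ‖p.1‖]) hr₂
      exact mul_le_mul keyA keyB (by positivity) (by positivity)
    rw [Real.norm_eq_abs, abs_of_nonneg (by positivity)]
    calc (1 + (‖p.1‖ ^ 2 + ‖p.2‖ ^ 2)) ^ (r₁ + r₂) * (‖𝓕 u₁ p.1‖ ^ 2 * ‖𝓕 u₂ p.2‖ ^ 2)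
        ≤ ((1 + ‖p.1‖ ^ 2) ^ r₁ * (1 + ‖p.2‖ ^ 2) ^ r₂) * (‖𝓕 u₁ p.1‖ ^ 2 * ‖𝓕 u₂ p.2‖ ^ 2) := by
          apply mul_le_mul_of_nonneg_right key (by positivity)
      _ = ((1 + ‖p.1‖ ^ 2) ^ r₁ * ‖𝓕 u₁ p.1‖ ^ 2) * ((1 + ‖p.2‖ ^ 2) ^ r₂ * ‖𝓕 u₂ p.2‖ ^ 2) := by
          ring
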